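/- Let g : ℝ → ℝ be left-continuous and non-decreasing, and let H be the Lebesgue–Stieltjes measure dH(θ) = dg(θ). Then for all x, y ∈ ℝ, (1(y < x) − α)·(g(x) − g(y)) = ∫ S^Q_{α,θ}(x,y) dH(θ), i.e., any consistent quantile scoring function of the form S(x,y) = (1(y<x)−α)(g(x)−g(y)) is a mixture of the elementary quantile scores. -/

import Mathlib

open MeasureTheory

/-- Elementary quantile score `S^Q_{α,θ}(x,y)`. -/
noncomputable def SQ (α θ x y : ℝ) : ℝ :=
  ((if y < x then (1:ℝ) else 0) - α) * ((if θ < x then (1:ℝ) else 0) - (if θ < y then (1:ℝ) else 0))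

/-- Mixture representation of consistent quantile scoring functions:
if `g` is left-continuous and non-decreasing and `H` is the Lebesgue–Stieltjes
measure `dg` (i.e. `H [a,b) = g b − g a`), then
`(1(y<x) − α)(g x − g y) = ∫ S^Q_{α,θ}(x,y) dH(θ)`. -/
theorem stmt2 (α : ℝ) (hα : α ∈ Set.Ioo (0:ℝ) 1) (g : ℝ → ℝ)
    (hg_mono : Monotone g)
    (hg_lc : ∀ x, ContinuousWithinAt g (Set.Iio x) x)
    (H : Measure ℝ)
    (hH : ∀ a b, a ≤ b → H (Set.Ico a b) = ENNReal.ofReal (g b - g a)) :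
    ∀ x y : ℝ,
      ((if y < x then (1:ℝ) else 0) - α) * (g x - g y) = ∫ θ, SQ α θ x y ∂H := by
  have key : ∀ a b : ℝ, a ≤ b →
      ∫ θ, ((if θ < b then (1:ℝ) else 0) - (if θ < a then (1:ℝ) else 0)) ∂H = g b - g a := by
    intro a b hab
    have heq : (fun θ => ((if θ < b then (1:ℝ) else 0) - (if θ < a then (1:ℝ) else 0)))
        = Set.indicator (Set.Ico a b) (fun _ => (1:ℝ)) := by
      funext θ
      by_cases h1 : θ < a
      · simp [Set.indicator, h1, h1.trans_le hab, Set.mem_Ico, not_le.mpr h1]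
      · by_cases h2 : θ < b
        · simp [Set.indicator, h1, h2, Set.mem_Ico, not_lt.mp h1]
        · simp [Set.indicator, h1, h2, Set.mem_Ico]
    rw [heq, integral_indicator measurableSet_Ico, setIntegral_const,
        measureReal_def, hH a b hab, ENNReal.toReal_ofReal (sub_nonneg.mpr (hg_mono hab))]
    simp
  intro x y
  simp only [SQ]
  rcases le_total y x with h | h
  · rw [integral_const_mul, key y x h]
  · have hrew : ∀ θ : ℝ,
        ((if y < x then (1:ℝ) else 0) - α) *
          ((if θ < x then (1:ℝ) else 0) - (if θ < y then (1:ℝ) else 0))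
        = (-((if y < x then (1:ℝ) else 0) - α)) *
          ((if θ < y then (1:ℝ) else 0) - (if θ < x then (1:ℝ) else 0)) := by
      intro θ; ring
    simp_rw [hrew]
    rw [integral_const_mul, key x y h]
    ring
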